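/- arXiv:0711.3677 — 5 statements merged into one kernel-verified Lean document; each statement's English description precedes it below -/
import Mathlib

section
/- Let SW be the graph obtained by subdividing each edge of the star K_{1,3} exactly once. Then the P_3-graph of SW is isomorphic to the cycle C_6. -/
/-- A 3-vertex path (P₃) of a simple graph `G`: a middle vertex together with an
unordered pair of distinct ends, each adjacent to the middle vertex.
This identifies the path `a-b-c` with `c-b-a`. -/
@[ext]
structure P3Path {V : Type*} (G : SimpleGraph V) where
  mid : V
  ends : Sym2 V
  not_diag : ¬ ends.IsDiag
  adj : ∀ x ∈ ends, G.Adj mid x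

/-- The `P₃`-graph of `G`: two 3-vertex paths are adjacent iff their union is a
path on 4 vertices or a cycle on 3 vertices; equivalently, the middle vertex of
each is an end of the other. -/
def P3Graph {V : Type*} (G : SimpleGraph V) : SimpleGraph (P3Path G) where
  Adj p q := p ≠ q ∧ q.mid ∈ p.ends ∧ p.mid ∈ q.ends
  symm := ⟨fun p q h => ⟨Ne.symm h.1, h.2.2, h.2.1⟩⟩
  loopless := ⟨fun p h => h.1 rfl⟩

/-- The subdivided star `SW`: `K_{1,3}` with each edge subdivided once.
Center `0`; middle vertices `1,2,3`; leaves `4,5,6`. -/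
def SW : SimpleGraph (Fin 7) :=
  SimpleGraph.fromEdgeSet {s(0,1), s(0,2), s(0,3), s(1,4), s(2,5), s(3,6)}

instance : DecidableRel SW.Adj := fun a b =>
  decidable_of_iff (a ≠ b ∧ (s(a,b) = s(0,1) ∨ s(a,b) = s(0,2) ∨ s(a,b) = s(0,3) ∨
      s(a,b) = s(1,4) ∨ s(a,b) = s(2,5) ∨ s(a,b) = s(3,6))) (by
    rw [SW, SimpleGraph.fromEdgeSet_adj]
    simp [Set.mem_insert_iff, and_comm])

instance : DecidableEq (P3Path SW) := fun p q =>
  decidable_of_iff (p.mid = q.mid ∧ p.ends = q.ends) (by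
    constructor
    · rintro ⟨h1, h2⟩; exact P3Path.ext h1 h2
    · rintro rfl; exact ⟨rfl, rfl⟩)

def f : Fin 6 → P3Path SW :=
  ![⟨0, s(1,2), by decide, by decide⟩,
    ⟨2, s(0,5), by decide, by decide⟩,
    ⟨0, s(2,3), by decide, by decide⟩,
    ⟨3, s(0,6), by decide, by decide⟩,
    ⟨0, s(1,3), by decide, by decide⟩,
    ⟨1, s(0,4), by decide, by decide⟩]

def g : P3Path SW → Fin 6 := fun p =>
  if p.mid = 1 then 5 else if p.mid = 2 then 1 else if p.mid = 3 then 3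
  else if p.ends = s(1,2) then 0 else if p.ends = s(2,3) then 2 else 4

lemma classify (p : P3Path SW) :
    p = f 0 ∨ p = f 1 ∨ p = f 2 ∨ p = f 3 ∨ p = f 4 ∨ p = f 5 := by
  obtain ⟨m, e, hd, ha⟩ := p
  induction e using Sym2.ind with
  | _ a b =>
    have h1 : SW.Adj m a := ha a (Sym2.mem_mk_left a b)
    have h2 : SW.Adj m b := ha b (Sym2.mem_mk_right a b)
    have hab : a ≠ b := by simpa [Sym2.mk_isDiag_iff] using hd
    have key : (m = 0 ∧ s(a,b) = s(1,2)) ∨ (m = 2 ∧ s(a,b) = s(0,5)) ∨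
        (m = 0 ∧ s(a,b) = s(2,3)) ∨ (m = 3 ∧ s(a,b) = s(0,6)) ∨
        (m = 0 ∧ s(a,b) = s(1,3)) ∨ (m = 1 ∧ s(a,b) = s(0,4)) := by
      clear hd ha
      revert m a b
      decide
    rcases key with h | h | h | h | h | h
    · exact Or.inl (P3Path.ext h.1 h.2)
    · exact Or.inr (Or.inl (P3Path.ext h.1 h.2))
    · exact Or.inr (Or.inr (Or.inl (P3Path.ext h.1 h.2)))
    · exact Or.inr (Or.inr (Or.inr (Or.inl (P3Path.ext h.1 h.2))))
    · exact Or.inr (Or.inr (Or.inr (Or.inr (Or.inl (P3Path.ext h.1 h.2)))))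
    · exact Or.inr (Or.inr (Or.inr (Or.inr (Or.inr (P3Path.ext h.1 h.2)))))

def e : Fin 6 ≃ P3Path SW where
  toFun := f
  invFun := g
  left_inv := by decide
  right_inv := fun p => by
    rcases classify p with h | h | h | h | h | h <;> rw [h] <;> rfl

instance : DecidableRel (P3Graph SW).Adj := fun p q =>
  decidable_of_iff (p ≠ q ∧ q.mid ∈ p.ends ∧ p.mid ∈ q.ends) Iff.rfl

lemma adj_iff (i j : Fin 6) :
    (P3Graph SW).Adj (f i) (f j) ↔ (SimpleGraph.cycleGraph 6).Adj i j := by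
  revert i j
  decide

/-- The `P₃`-graph of the once-subdivided star `K_{1,3}` is isomorphic to the
cycle `C₆`. -/
theorem p3_SW_iso_C6 : Nonempty (P3Graph SW ≃g SimpleGraph.cycleGraph 6) := by
  exact ⟨(RelIso.mk e (fun {i j} => adj_iff i j)).symm⟩
end

section
/- The subdivided star SW (each edge of K_{1,3} subdivided once) and the cycle C_6 are nonisomorphic connected graphs whose P_3-graphs are both isomorphic to C_6 and hence isomorphic to each other. -/
lemma SW_adj (v w : Fin 7) : SW.Adj v w ↔
    (v,w) ∈ ([(0,1),(1,0),(0,2),(2,0),(0,3),(3,0),(1,4),(4,1),(2,5),(5,2),(3,6),(6,3)] :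
      List (Fin 7 × Fin 7)) := by
  simp [SW, Sym2.eq_iff]
  aesop

instance inst_s2 : DecidableRel SW.Adj := fun v w => decidable_of_iff _ (SW_adj v w).symm

/-- The six `P₃`'s of `SW`, in cyclic order. -/
def swList : List (Fin 7 × Sym2 (Fin 7)) :=
  [(1, s(0,4)), (0, s(1,2)), (2, s(0,5)), (0, s(2,3)), (3, s(0,6)), (0, s(1,3))]

lemma SW_class (m x y : Fin 7) (hxy : x ≠ y) (hx : SW.Adj m x) (hy : SW.Adj m y) :
    (m, s(x,y)) ∈ swList := by
  revert hxy hx hy; revert m x y; decide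

lemma swP3_cases (p : P3Path SW) : (p.mid, p.ends) ∈ swList := by
  obtain ⟨m, e, nd, adj⟩ := p
  induction e using Sym2.ind with
  | _ x y =>
    exact SW_class m x y (by simpa using nd) (adj x (by simp)) (adj y (by simp))

/-- Index of a `P₃` of `SW` in the cyclic order. -/
def swIdx : Fin 7 × Sym2 (Fin 7) → Fin 6 := fun a =>
  if a.1 = 1 then 0 else if a.2 = s(1,2) then 1
  else if a.1 = 2 then 2 else if a.2 = s(2,3) then 3
  else if a.1 = 3 then 4 else 5

/-- The six `P₃`'s of `SW` as terms of `P3Path SW`. -/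
def swP : Fin 6 → P3Path SW
  | 0 => ⟨1, s(0,4), by decide, by decide⟩
  | 1 => ⟨0, s(1,2), by decide, by decide⟩
  | 2 => ⟨2, s(0,5), by decide, by decide⟩
  | 3 => ⟨0, s(2,3), by decide, by decide⟩
  | 4 => ⟨3, s(0,6), by decide, by decide⟩
  | 5 => ⟨0, s(1,3), by decide, by decide⟩

set_option maxRecDepth 20000 in
lemma sw_key : ∀ a ∈ swList, ∀ b ∈ swList,
    ((SimpleGraph.cycleGraph 6).Adj (swIdx a) (swIdx b) ↔
      (a ≠ b ∧ b.1 ∈ a.2 ∧ a.1 ∈ b.2)) := by decide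

set_option maxRecDepth 20000 in
lemma sw_left : ∀ a ∈ swList, (swP (swIdx a)).mid = a.1 ∧ (swP (swIdx a)).ends = a.2 := by
  decide

/-- The `P₃`-graph of `SW` is isomorphic to `C₆`. -/
def swIso : P3Graph SW ≃g SimpleGraph.cycleGraph 6 where
  toFun p := swIdx (p.mid, p.ends)
  invFun := swP
  left_inv p := by
    have h := sw_left ⟨p.mid, p.ends⟩ (swP3_cases p)
    exact P3Path.ext h.1 h.2
  right_inv i := by fin_cases i <;> decide
  map_rel_iff' := by
    intro p q
    have h := sw_key ⟨p.mid, p.ends⟩ (swP3_cases p) ⟨q.mid, q.ends⟩ (swP3_cases q)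
    simp only [Equiv.coe_fn_mk] at *
    rw [h]
    show _ ↔ (P3Graph SW).Adj p q
    simp only [P3Graph, ne_eq, Prod.mk.injEq, not_and, P3Path.ext_iff]

lemma c6_nd : ∀ i : Fin 6, ¬ (s(i-1, i+1) : Sym2 (Fin 6)).IsDiag := by decide

lemma c6_adj : ∀ i : Fin 6, ∀ x ∈ (s(i-1, i+1) : Sym2 (Fin 6)),
    (SimpleGraph.cycleGraph 6).Adj i x := by decide

lemma C6_class (m x y : Fin 6) (hxy : x ≠ y) (hx : (SimpleGraph.cycleGraph 6).Adj m x)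
    (hy : (SimpleGraph.cycleGraph 6).Adj m y) : s(x,y) = s(m-1, m+1) := by
  revert hxy hx hy; revert m x y; decide

lemma c6P3_ends (p : P3Path (SimpleGraph.cycleGraph 6)) :
    p.ends = s(p.mid - 1, p.mid + 1) := by
  obtain ⟨m, e, nd, adj⟩ := p
  induction e using Sym2.ind with
  | _ x y =>
    exact C6_class m x y (by simpa using nd) (adj x (by simp)) (adj y (by simp))

lemma c6_key : ∀ a b : Fin 6, (SimpleGraph.cycleGraph 6).Adj a b ↔
    (¬(a = b) ∧ b ∈ (s(a-1, a+1) : Sym2 (Fin 6)) ∧ a ∈ (s(b-1, b+1) : Sym2 (Fin 6))) := by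
  decide

/-- The `P₃`-graph of `C₆` is isomorphic to `C₆`. -/
def c6Iso : P3Graph (SimpleGraph.cycleGraph 6) ≃g SimpleGraph.cycleGraph 6 where
  toFun p := p.mid
  invFun i := ⟨i, s(i-1, i+1), c6_nd i, c6_adj i⟩
  left_inv p := (P3Path.ext rfl (c6P3_ends p).symm)
  right_inv i := rfl
  map_rel_iff' := by
    intro p q
    simp only [Equiv.coe_fn_mk]
    rw [c6_key]
    show _ ↔ (P3Graph (SimpleGraph.cycleGraph 6)).Adj p q
    simp only [P3Graph, ne_eq, P3Path.ext_iff, c6P3_ends p, c6P3_ends q]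
    constructor
    · rintro ⟨h1, h2, h3⟩
      exact ⟨fun h => h1 h.1, h2, h3⟩
    · rintro ⟨h1, h2, h3⟩
      refine ⟨fun h => h1 ⟨h, by rw [h]⟩, h2, h3⟩

/-- `SW` and `C₆` are nonisomorphic connected graphs whose `P₃`-graphs are both
isomorphic to `C₆`, hence isomorphic to each other. -/
theorem SW_C6_noniso_same_P3 :
    ¬ Nonempty (SW ≃g SimpleGraph.cycleGraph 6) ∧
    SW.Connected ∧ (SimpleGraph.cycleGraph 6).Connected ∧
    Nonempty (P3Graph SW ≃g SimpleGraph.cycleGraph 6) ∧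
    Nonempty (P3Graph (SimpleGraph.cycleGraph 6) ≃g SimpleGraph.cycleGraph 6) ∧
    Nonempty (P3Graph SW ≃g P3Graph (SimpleGraph.cycleGraph 6)) := by
  refine ⟨?_, ?_, ?_, ⟨swIso⟩, ⟨c6Iso⟩, ⟨swIso.trans c6Iso.symm⟩⟩
  · rintro ⟨e⟩
    have := Fintype.card_congr e.toEquiv
    simp at this
  · rw [SimpleGraph.connected_iff]
    exact ⟨by decide, inferInstance⟩
  · rw [SimpleGraph.connected_iff]
    exact ⟨by decide, inferInstance⟩
end

section
/- Let G be a graph containing a 5-vertex path a-b-c-d-e such that deg(a) = deg(e) = 1 and deg(c) = 2 in G. Then the map on 3-vertex paths of G that swaps the paths abc and cde and fixes all other 3-vertex paths is an automorphism of P_3(G) (an S-swap). -/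
/-- **S-swap.** If `a-b-c-d-e` is a 5-vertex path with `deg a = deg e = 1` and
`deg c = 2`, then the map on 3-vertex paths swapping `abc` and `cde` and fixing
all other paths is an automorphism of `P₃(G)`. -/
theorem s_swap_automorphism {V : Type*} [Fintype V] [DecidableEq V]
    (G : SimpleGraph V) [DecidableRel G.Adj] (a b c d e : V)
    (hab : G.Adj a b) (hbc : G.Adj b c) (hcd : G.Adj c d) (hde : G.Adj d e)
    (hdist : [a, b, c, d, e].Nodup)
    (ha : G.degree a = 1) (he : G.degree e = 1) (hc : G.degree c = 2)
    (p₁ p₂ : P3Path G) (hp₁m : p₁.mid = b) (hp₁e : p₁.ends = s(a, c))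
    (hp₂m : p₂.mid = d) (hp₂e : p₂.ends = s(c, e))
    (f : P3Path G → P3Path G) (hf₁ : f p₁ = p₂) (hf₂ : f p₂ = p₁)
    (hffix : ∀ q, q ≠ p₁ → q ≠ p₂ → f q = q) :
    ∃ τ : P3Graph G ≃g P3Graph G, ∀ p, τ p = f p := by
  simp only [List.nodup_cons, List.mem_cons, List.mem_singleton, List.not_mem_nil,
    or_false, not_or, List.nodup_nil, and_true] at hdist
  obtain ⟨⟨hAB, hAC, hAD, hAE⟩, ⟨hBC, hBD, hBE⟩, ⟨hCD, hCE⟩, hDE⟩ := hdist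
  -- no P3 path has middle vertex of degree 1
  have honly : ∀ (v : V), G.degree v = 1 → ∀ q : P3Path G, q.mid ≠ v := by
    intro v hv q hq
    have h2 : 2 ≤ G.degree v := by
      rcases q with ⟨m, ends, nd, adj⟩
      dsimp at hq; subst hq
      revert nd adj
      induction ends using Sym2.ind with
      | _ x y =>
        intro nd adj
        have hxy : x ≠ y := by simpa using nd
        have hx : x ∈ G.neighborFinset m := by
          rw [SimpleGraph.mem_neighborFinset]; exact adj x (by simp)
        have hy : y ∈ G.neighborFinset m := by
          rw [SimpleGraph.mem_neighborFinset]; exact adj y (by simp)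
        have hsub : ({x, y} : Finset V) ⊆ G.neighborFinset m := by
          intro z hz
          rcases Finset.mem_insert.mp hz with rfl | hz
          · exact hx
          · rw [Finset.mem_singleton] at hz; subst hz; exact hy
        have := Finset.card_le_card hsub
        rw [Finset.card_insert_of_notMem (by simpa using hxy), Finset.card_singleton] at this
        have hdeg : G.degree m = (G.neighborFinset m).card := rfl
        omega
    omega
  have hNc : G.neighborFinset c = {b, d} := by
    refine (Finset.eq_of_subset_of_card_le ?_ ?_).symm
    · intro z hz
      rw [SimpleGraph.mem_neighborFinset]
      rcases Finset.mem_insert.mp hz with rfl | hz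
      · exact hbc.symm
      · rw [Finset.mem_singleton] at hz; subst hz; exact hcd
    · rw [Finset.card_insert_of_notMem (by simpa using hBD), Finset.card_singleton]
      exact le_of_eq hc
  -- any P3 path with middle c has ends {b, d}
  have hendsc : ∀ q : P3Path G, q.mid = c → q.ends = s(b, d) := by
    intro q hm
    rcases q with ⟨m, ends, nd, adj⟩
    dsimp at hm ⊢; subst hm
    revert nd adj
    induction ends using Sym2.ind with
    | _ x y =>
      intro nd adj
      have hxy : x ≠ y := by simpa using nd
      have hx : x ∈ G.neighborFinset m := by
        rw [SimpleGraph.mem_neighborFinset]; exact adj x (by simp)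
      have hy : y ∈ G.neighborFinset m := by
        rw [SimpleGraph.mem_neighborFinset]; exact adj y (by simp)
      rw [hNc] at hx hy
      simp only [Finset.mem_insert, Finset.mem_singleton] at hx hy
      rcases hx with rfl | rfl <;> rcases hy with rfl | rfl
      · exact absurd rfl hxy
      · rfl
      · exact Sym2.eq_swap
      · exact absurd rfl hxy
  have char1 : ∀ q : P3Path G, (P3Graph G).Adj p₁ q ↔ (q.mid = c ∧ q.ends = s(b, d)) := by
    intro q
    constructor
    · rintro ⟨hne, hqm, hpm⟩
      rw [hp₁e] at hqm
      rcases Sym2.mem_iff.mp hqm with h | h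
      · exact absurd h (honly a ha q)
      · exact ⟨h, hendsc q h⟩
    · rintro ⟨hm, hends⟩
      refine ⟨?_, ?_, ?_⟩
      · intro h; rw [← h, hp₁m] at hm; exact hBC hm
      · rw [hp₁e, hm]; simp
      · rw [hends, hp₁m]; simp
  have char2 : ∀ q : P3Path G, (P3Graph G).Adj p₂ q ↔ (q.mid = c ∧ q.ends = s(b, d)) := by
    intro q
    constructor
    · rintro ⟨hne, hqm, hpm⟩
      rw [hp₂e] at hqm
      rcases Sym2.mem_iff.mp hqm with h | h
      · exact ⟨h, hendsc q h⟩
      · exact absurd h (honly e he q)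
    · rintro ⟨hm, hends⟩
      refine ⟨?_, ?_, ?_⟩
      · intro h; rw [← h, hp₂m] at hm; exact hCD hm.symm
      · rw [hp₂e, hm]; simp
      · rw [hends, hp₂m]; simp
  have key : ∀ q : P3Path G, (P3Graph G).Adj p₁ q ↔ (P3Graph G).Adj p₂ q := fun q =>
    (char1 q).trans (char2 q).symm
  have hL : ∀ p q : P3Path G, (P3Graph G).Adj (f p) q ↔ (P3Graph G).Adj p q := by
    intro p q
    by_cases h1 : p = p₁
    · subst h1; rw [hf₁]; exact (key q).symm
    by_cases h2 : p = p₂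
    · subst h2; rw [hf₂]; exact key q
    · rw [hffix p h1 h2]
  have hR : ∀ p q : P3Path G, (P3Graph G).Adj p (f q) ↔ (P3Graph G).Adj p q := by
    intro p q
    rw [(P3Graph G).adj_comm, hL, (P3Graph G).adj_comm]
  have hswap : ∀ p q : P3Path G, (P3Graph G).Adj (f p) (f q) ↔ (P3Graph G).Adj p q := by
    intro p q; rw [hL, hR]
  have hinv : ∀ x, f (f x) = x := by
    intro x
    by_cases h1 : x = p₁
    · subst h1; rw [hf₁, hf₂]
    by_cases h2 : x = p₂
    · subst h2; rw [hf₂, hf₁]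
    · rw [hffix x h1 h2, hffix x h1 h2]
  exact ⟨⟨⟨f, f, hinv, hinv⟩, fun {p q} => hswap p q⟩, fun p => rfl⟩
end

section
/- Let G be a graph containing distinct vertices a, b and distinct vertices c_i, c_j, each of degree 2 in G, with both c_i and c_j adjacent to both a and b (a diamond pair). Then the map on 3-vertex paths of G that swaps the paths c_i a c_j and c_i b c_j and fixes all other 3-vertex paths is an automorphism of P_3(G) (a D-swap). -/
/-- **D-swap.** If `cᵢ, cⱼ` are distinct vertices of degree 2, both adjacent to
the distinct vertices `a` and `b` (a diamond pair), then the map on 3-vertex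
paths swapping `cᵢ a cⱼ` and `cᵢ b cⱼ` and fixing all other paths is an
automorphism of `P₃(G)`. -/
theorem d_swap_automorphism {V : Type*} [Fintype V] [DecidableEq V]
    (G : SimpleGraph V) [DecidableRel G.Adj] (a b ci cj : V)
    (hab : a ≠ b) (hij : ci ≠ cj)
    (hia : G.Adj ci a) (hib : G.Adj ci b) (hja : G.Adj cj a) (hjb : G.Adj cj b)
    (hi : G.degree ci = 2) (hj : G.degree cj = 2)
    (p₁ p₂ : P3Path G) (hp₁m : p₁.mid = a) (hp₁e : p₁.ends = s(ci, cj))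
    (hp₂m : p₂.mid = b) (hp₂e : p₂.ends = s(ci, cj))
    (f : P3Path G → P3Path G) (hf₁ : f p₁ = p₂) (hf₂ : f p₂ = p₁)
    (hffix : ∀ q, q ≠ p₁ → q ≠ p₂ → f q = q) :
    ∃ τ : P3Graph G ≃g P3Graph G, ∀ p, τ p = f p := by
  have hinv : Function.Involutive f := by
    intro p
    by_cases h1 : p = p₁
    · subst h1; rw [hf₁, hf₂]
    by_cases h2 : p = p₂
    · subst h2; rw [hf₂, hf₁]
    · rw [hffix p h1 h2, hffix p h1 h2]
  have hnbr : ∀ c, G.degree c = 2 → G.Adj c a → G.Adj c b →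
      ∀ x, G.Adj c x → x = a ∨ x = b := by
    intro c hc hca hcb x hcx
    have hsub : ({a, b} : Finset V) ⊆ G.neighborFinset c := by
      intro y hy
      simp only [Finset.mem_insert, Finset.mem_singleton] at hy
      rcases hy with rfl | rfl <;> simpa [SimpleGraph.mem_neighborFinset]
    have hcard : ({a, b} : Finset V).card = 2 := by
      rw [Finset.card_insert_of_notMem (by simpa using hab), Finset.card_singleton]
    have heq : ({a, b} : Finset V) = G.neighborFinset c :=
      Finset.eq_of_subset_of_card_le hsub (by rw [hcard]; exact le_of_eq hc)
    have hx : x ∈ ({a, b} : Finset V) := by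
      rw [heq]; simpa [SimpleGraph.mem_neighborFinset]
    simpa using hx
  -- every P3Path whose middle is ci or cj has ends s(a,b)
  have hends : ∀ q : P3Path G, (q.mid = ci ∨ q.mid = cj) → q.ends = s(a, b) := by
    rintro ⟨m, e, hd, hadj⟩ hm
    simp only at hm hd hadj ⊢
    have hmn : ∀ z, G.Adj m z → z = a ∨ z = b := by
      rcases hm with rfl | rfl
      · exact hnbr m hi hia hib
      · exact hnbr m hj hja hjb
    induction e using Sym2.ind with
    | _ x y =>
      have hxy : x ≠ y := by simpa [Sym2.mk_isDiag_iff] using hd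
      have hx := hmn x (hadj x (Sym2.mem_mk_left x y))
      have hy := hmn y (hadj y (Sym2.mem_mk_right x y))
      rcases hx with rfl | rfl <;> rcases hy with rfl | rfl
      · exact absurd rfl hxy
      · rfl
      · exact Sym2.eq_swap
      · exact absurd rfl hxy
  have hbne : ∀ m, m = ci ∨ m = cj → b ≠ m := by
    rintro m (rfl | rfl)
    · exact hib.ne'
    · exact hjb.ne'
  have hane : ∀ m, m = ci ∨ m = cj → a ≠ m := by
    rintro m (rfl | rfl)
    · exact hia.ne'
    · exact hja.ne'
  -- p₁ and p₂ have the same neighbourhood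
  have hadj12 : ∀ q, (P3Graph G).Adj p₁ q → (P3Graph G).Adj p₂ q := by
    rintro q (⟨hne, hqm, hpm⟩ : p₁ ≠ q ∧ q.mid ∈ p₁.ends ∧ p₁.mid ∈ q.ends)
    rw [hp₁e] at hqm
    have hqm' : q.mid = ci ∨ q.mid = cj := Sym2.mem_iff.mp hqm
    have he := hends q hqm'
    refine ⟨fun h => hbne q.mid hqm' (h ▸ hp₂m).symm, ?_, ?_⟩
    · rw [hp₂e]; exact hqm
    · rw [hp₂m, he]; simp
  have hadj21 : ∀ q, (P3Graph G).Adj p₂ q → (P3Graph G).Adj p₁ q := by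
    rintro q (⟨hne, hqm, hpm⟩ : p₂ ≠ q ∧ q.mid ∈ p₂.ends ∧ p₂.mid ∈ q.ends)
    rw [hp₂e] at hqm
    have hqm' : q.mid = ci ∨ q.mid = cj := Sym2.mem_iff.mp hqm
    have he := hends q hqm'
    refine ⟨fun h => hane q.mid hqm' (h ▸ hp₁m).symm, ?_, ?_⟩
    · rw [hp₁e]; exact hqm
    · rw [hp₁m, he]; simp
  have hnadj : ¬ (P3Graph G).Adj p₁ p₂ := by
    rintro (⟨hne, hqm, hpm⟩ : p₁ ≠ p₂ ∧ p₂.mid ∈ p₁.ends ∧ p₁.mid ∈ p₂.ends)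
    rw [hp₁e, hp₂m] at hqm
    exact hbne _ (Sym2.mem_iff.mp hqm) rfl
  have key : ∀ p q, (P3Graph G).Adj p q → (P3Graph G).Adj (f p) (f q) := by
    intro p q hpq
    by_cases hp1 : p = p₁
    · have hpq' : (P3Graph G).Adj p₁ q := by rwa [hp1] at hpq
      by_cases hq2 : q = p₂
      · rw [hq2] at hpq'; exact absurd hpq' hnadj
      have hq1 : q ≠ p₁ := fun h => (P3Graph G).loopless.irrefl p₁ (by rwa [h] at hpq')
      rw [hp1, hf₁, hffix q hq1 hq2]
      exact hadj12 q hpq'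
    by_cases hp2 : p = p₂
    · have hpq' : (P3Graph G).Adj p₂ q := by rwa [hp2] at hpq
      by_cases hq1 : q = p₁
      · rw [hq1] at hpq'; exact absurd hpq'.symm hnadj
      have hq2 : q ≠ p₂ := fun h => (P3Graph G).loopless.irrefl p₂ (by rwa [h] at hpq')
      rw [hp2, hf₂, hffix q hq1 hq2]
      exact hadj21 q hpq' 
    rw [hffix p hp1 hp2]
    by_cases hq1 : q = p₁
    · rw [hq1, hf₁]
      exact ((P3Graph G).symm.symm _ _ (hadj12 p ((P3Graph G).symm.symm p p₁ (hq1 ▸ hpq))))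
    by_cases hq2 : q = p₂
    · rw [hq2, hf₂]
      exact ((P3Graph G).symm.symm _ _ (hadj21 p ((P3Graph G).symm.symm p p₂ (hq2 ▸ hpq))))
    rw [hffix q hq1 hq2]
    exact hpq
  refine ⟨⟨Function.Involutive.toPerm f hinv, ?_⟩, fun p => rfl⟩
  intro p q
  constructor
  · intro h
    have h' : (P3Graph G).Adj (f p) (f q) := h
    have := key _ _ h'
    rwa [hinv p, hinv q] at this
  · exact key p q
end

section
/- Let F = K_{1,3} with center a and leaves b, c, d, and for any positive integers s_1, s_2, s_3 let G be the graph obtained by replacing the edge ab by s_1 internally disjoint paths of length 2 from a to b, edge ac by s_2 such paths, and edge ad by s_3 such paths (an unbraced diamond inflation with no terminal edges); let H be the graph similarly obtained from K_3 on vertices u, v, w with edge uv inflated to width s_1, uw to width s_2, vw to width s_3. Then G and H are connected, nonisomorphic when (s_1,s_2,s_3) = (1,1,1) (giving SW and C_6), and in that case P_3(G) ≅ P_3(H). -/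
/-- The diamond inflation of `K_{1,3}` (center `inl 0`, outer vertices
`inl 1, inl 2, inl 3`) in which the edge to `inl 1` is replaced by `s₁`
internally disjoint paths of length 2, similarly `s₂` and `s₃`. -/
def starInflation (s₁ s₂ s₃ : ℕ) :
    SimpleGraph ((Fin 4) ⊕ (Fin s₁ ⊕ Fin s₂ ⊕ Fin s₃)) :=
  SimpleGraph.fromRel fun x y =>
    ((x = Sum.inl 0 ∨ x = Sum.inl 1) ∧ ∃ i, y = Sum.inr (Sum.inl i)) ∨
    ((x = Sum.inl 0 ∨ x = Sum.inl 2) ∧ ∃ i, y = Sum.inr (Sum.inr (Sum.inl i))) ∨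
    ((x = Sum.inl 0 ∨ x = Sum.inl 3) ∧ ∃ i, y = Sum.inr (Sum.inr (Sum.inr i)))

/-- The diamond inflation of `K₃` (vertices `inl 0 = u`, `inl 1 = v`,
`inl 2 = w`) in which edge `uv` is replaced by `s₁` internally disjoint paths
of length 2, `uw` by `s₂`, and `vw` by `s₃`. -/
def triangleInflation (s₁ s₂ s₃ : ℕ) :
    SimpleGraph ((Fin 3) ⊕ (Fin s₁ ⊕ Fin s₂ ⊕ Fin s₃)) :=
  SimpleGraph.fromRel fun x y =>
    ((x = Sum.inl 0 ∨ x = Sum.inl 1) ∧ ∃ i, y = Sum.inr (Sum.inl i)) ∨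
    ((x = Sum.inl 0 ∨ x = Sum.inl 2) ∧ ∃ i, y = Sum.inr (Sum.inr (Sum.inl i))) ∨
    ((x = Sum.inl 1 ∨ x = Sum.inl 2) ∧ ∃ i, y = Sum.inr (Sum.inr (Sum.inr i)))

namespace STI

def sRel (s₁ s₂ s₃ : ℕ) (x y : (Fin 4) ⊕ (Fin s₁ ⊕ Fin s₂ ⊕ Fin s₃)) : Prop :=
    ((x = Sum.inl 0 ∨ x = Sum.inl 1) ∧ ∃ i, y = Sum.inr (Sum.inl i)) ∨
    ((x = Sum.inl 0 ∨ x = Sum.inl 2) ∧ ∃ i, y = Sum.inr (Sum.inr (Sum.inl i))) ∨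
    ((x = Sum.inl 0 ∨ x = Sum.inl 3) ∧ ∃ i, y = Sum.inr (Sum.inr (Sum.inr i)))

def tRel (s₁ s₂ s₃ : ℕ) (x y : (Fin 3) ⊕ (Fin s₁ ⊕ Fin s₂ ⊕ Fin s₃)) : Prop :=
    ((x = Sum.inl 0 ∨ x = Sum.inl 1) ∧ ∃ i, y = Sum.inr (Sum.inl i)) ∨
    ((x = Sum.inl 0 ∨ x = Sum.inl 2) ∧ ∃ i, y = Sum.inr (Sum.inr (Sum.inl i))) ∨
    ((x = Sum.inl 1 ∨ x = Sum.inl 2) ∧ ∃ i, y = Sum.inr (Sum.inr (Sum.inr i)))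

instance (s₁ s₂ s₃ : ℕ) (a b : (Fin 4) ⊕ (Fin s₁ ⊕ Fin s₂ ⊕ Fin s₃)) :
    Decidable (sRel s₁ s₂ s₃ a b) :=
  @instDecidableOr _ _ inferInstance (@instDecidableOr _ _ inferInstance inferInstance)

instance (s₁ s₂ s₃ : ℕ) (a b : (Fin 3) ⊕ (Fin s₁ ⊕ Fin s₂ ⊕ Fin s₃)) :
    Decidable (tRel s₁ s₂ s₃ a b) :=
  @instDecidableOr _ _ inferInstance (@instDecidableOr _ _ inferInstance inferInstance)

instance (s₁ s₂ s₃ : ℕ) : DecidableRel (starInflation s₁ s₂ s₃).Adj := fun a b =>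
  inferInstanceAs (Decidable (a ≠ b ∧ (sRel s₁ s₂ s₃ a b ∨ sRel s₁ s₂ s₃ b a)))

instance (s₁ s₂ s₃ : ℕ) : DecidableRel (triangleInflation s₁ s₂ s₃).Adj := fun a b =>
  inferInstanceAs (Decidable (a ≠ b ∧ (tRel s₁ s₂ s₃ a b ∨ tRel s₁ s₂ s₃ b a)))

lemma star_adj {s₁ s₂ s₃ : ℕ} {x y : (Fin 4) ⊕ (Fin s₁ ⊕ Fin s₂ ⊕ Fin s₃)}
    (h : x ≠ y) (hr : sRel s₁ s₂ s₃ x y ∨ sRel s₁ s₂ s₃ y x) :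
    (starInflation s₁ s₂ s₃).Adj x y := ⟨h, hr⟩

lemma tri_adj {s₁ s₂ s₃ : ℕ} {x y : (Fin 3) ⊕ (Fin s₁ ⊕ Fin s₂ ⊕ Fin s₃)}
    (h : x ≠ y) (hr : tRel s₁ s₂ s₃ x y ∨ tRel s₁ s₂ s₃ y x) :
    (triangleInflation s₁ s₂ s₃).Adj x y := ⟨h, hr⟩

lemma star_reach (s₁ s₂ s₃ : ℕ) (h₁ : 0 < s₁) (h₂ : 0 < s₂) (h₃ : 0 < s₃)
    (v : (Fin 4) ⊕ (Fin s₁ ⊕ Fin s₂ ⊕ Fin s₃)) :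
    (starInflation s₁ s₂ s₃).Reachable v (Sum.inl 0) := by
  have r1 : ∀ i, (starInflation s₁ s₂ s₃).Adj (Sum.inl 0) (Sum.inr (Sum.inl i)) :=
    fun i => star_adj (by simp) (Or.inl (Or.inl ⟨Or.inl rfl, i, rfl⟩))
  have r2 : ∀ i, (starInflation s₁ s₂ s₃).Adj (Sum.inl 0) (Sum.inr (Sum.inr (Sum.inl i))) :=
    fun i => star_adj (by simp) (Or.inl (Or.inr (Or.inl ⟨Or.inl rfl, i, rfl⟩)))
  have r3 : ∀ i, (starInflation s₁ s₂ s₃).Adj (Sum.inl 0) (Sum.inr (Sum.inr (Sum.inr i))) :=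
    fun i => star_adj (by simp) (Or.inl (Or.inr (Or.inr ⟨Or.inl rfl, i, rfl⟩)))
  have rb : ∀ i, (starInflation s₁ s₂ s₃).Adj (Sum.inl 1) (Sum.inr (Sum.inl i)) :=
    fun i => star_adj (by simp) (Or.inl (Or.inl ⟨Or.inr rfl, i, rfl⟩))
  have rc : ∀ i, (starInflation s₁ s₂ s₃).Adj (Sum.inl 2) (Sum.inr (Sum.inr (Sum.inl i))) :=
    fun i => star_adj (by simp) (Or.inl (Or.inr (Or.inl ⟨Or.inr rfl, i, rfl⟩)))
  have rd : ∀ i, (starInflation s₁ s₂ s₃).Adj (Sum.inl 3) (Sum.inr (Sum.inr (Sum.inr i))) :=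
    fun i => star_adj (by simp) (Or.inl (Or.inr (Or.inr ⟨Or.inr rfl, i, rfl⟩)))
  obtain (j | (i | i | i)) := v
  · fin_cases j
    · exact SimpleGraph.Reachable.refl _
    · exact ((rb ⟨0, h₁⟩).reachable).trans ((r1 ⟨0, h₁⟩).symm.reachable)
    · exact ((rc ⟨0, h₂⟩).reachable).trans ((r2 ⟨0, h₂⟩).symm.reachable)
    · exact ((rd ⟨0, h₃⟩).reachable).trans ((r3 ⟨0, h₃⟩).symm.reachable)
  · exact (r1 i).symm.reachable
  · exact (r2 i).symm.reachable
  · exact (r3 i).symm.reachable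

lemma tri_reach (s₁ s₂ s₃ : ℕ) (h₁ : 0 < s₁) (h₂ : 0 < s₂) (h₃ : 0 < s₃)
    (v : (Fin 3) ⊕ (Fin s₁ ⊕ Fin s₂ ⊕ Fin s₃)) :
    (triangleInflation s₁ s₂ s₃).Reachable v (Sum.inl 0) := by
  have r1 : ∀ i, (triangleInflation s₁ s₂ s₃).Adj (Sum.inl 0) (Sum.inr (Sum.inl i)) :=
    fun i => tri_adj (by simp) (Or.inl (Or.inl ⟨Or.inl rfl, i, rfl⟩))
  have r2 : ∀ i, (triangleInflation s₁ s₂ s₃).Adj (Sum.inl 0) (Sum.inr (Sum.inr (Sum.inl i))) :=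
    fun i => tri_adj (by simp) (Or.inl (Or.inr (Or.inl ⟨Or.inl rfl, i, rfl⟩)))
  have rv1 : ∀ i, (triangleInflation s₁ s₂ s₃).Adj (Sum.inl 1) (Sum.inr (Sum.inl i)) :=
    fun i => tri_adj (by simp) (Or.inl (Or.inl ⟨Or.inr rfl, i, rfl⟩))
  have rw2 : ∀ i, (triangleInflation s₁ s₂ s₃).Adj (Sum.inl 2) (Sum.inr (Sum.inr (Sum.inl i))) :=
    fun i => tri_adj (by simp) (Or.inl (Or.inr (Or.inl ⟨Or.inr rfl, i, rfl⟩)))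
  have rv3 : ∀ i, (triangleInflation s₁ s₂ s₃).Adj (Sum.inl 1) (Sum.inr (Sum.inr (Sum.inr i))) :=
    fun i => tri_adj (by simp) (Or.inl (Or.inr (Or.inr ⟨Or.inl rfl, i, rfl⟩)))
  have reach1 : (triangleInflation s₁ s₂ s₃).Reachable (Sum.inl 1) (Sum.inl 0) :=
    ((rv1 ⟨0, h₁⟩).reachable).trans ((r1 ⟨0, h₁⟩).symm.reachable)
  obtain (j | (i | i | i)) := v
  · fin_cases j
    · exact SimpleGraph.Reachable.refl _
    · exact reach1
    · exact ((rw2 ⟨0, h₂⟩).reachable).trans ((r2 ⟨0, h₂⟩).symm.reachable)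
  · exact (r1 i).symm.reachable
  · exact (r2 i).symm.reachable
  · exact ((rv3 i).symm.reachable).trans reach1

instance {V : Type*} [DecidableEq V] {G : SimpleGraph V} : DecidableEq (P3Path G) :=
  fun p q => decidable_of_iff (p.mid = q.mid ∧ p.ends = q.ends)
    ⟨fun ⟨h1, h2⟩ => P3Path.ext h1 h2, fun h => by cases h; exact ⟨rfl, rfl⟩⟩

instance {V : Type*} [DecidableEq V] {G : SimpleGraph V} : DecidableRel (P3Graph G).Adj :=
  fun p q => inferInstanceAs (Decidable (p ≠ q ∧ q.mid ∈ p.ends ∧ p.mid ∈ q.ends))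

abbrev Gs := starInflation 1 1 1
abbrev Hs := triangleInflation 1 1 1
abbrev V7 : Type := (Fin 4) ⊕ (Fin 1 ⊕ Fin 1 ⊕ Fin 1)
abbrev V6 : Type := (Fin 3) ⊕ (Fin 1 ⊕ Fin 1 ⊕ Fin 1)

abbrev va : V7 := Sum.inl 0
abbrev vb : V7 := Sum.inl 1
abbrev vc : V7 := Sum.inl 2
abbrev vd : V7 := Sum.inl 3
abbrev x1 : V7 := Sum.inr (Sum.inl 0)
abbrev x2 : V7 := Sum.inr (Sum.inr (Sum.inl 0))
abbrev x3 : V7 := Sum.inr (Sum.inr (Sum.inr 0))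

abbrev uu : V6 := Sum.inl 0
abbrev uv : V6 := Sum.inl 1
abbrev uw : V6 := Sum.inl 2
abbrev z1 : V6 := Sum.inr (Sum.inl 0)
abbrev z2 : V6 := Sum.inr (Sum.inr (Sum.inl 0))
abbrev z3 : V6 := Sum.inr (Sum.inr (Sum.inr 0))

def gA : P3Path Gs := ⟨va, s(x1, x2), by decide, by decide⟩
def gB : P3Path Gs := ⟨va, s(x2, x3), by decide, by decide⟩
def gC : P3Path Gs := ⟨va, s(x1, x3), by decide, by decide⟩
def gP : P3Path Gs := ⟨x1, s(va, vb), by decide, by decide⟩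
def gQ : P3Path Gs := ⟨x2, s(va, vc), by decide, by decide⟩
def gR : P3Path Gs := ⟨x3, s(va, vd), by decide, by decide⟩

def hU : P3Path Hs := ⟨uu, s(z1, z2), by decide, by decide⟩
def hV : P3Path Hs := ⟨uv, s(z1, z3), by decide, by decide⟩
def hW : P3Path Hs := ⟨uw, s(z2, z3), by decide, by decide⟩
def hZ1 : P3Path Hs := ⟨z1, s(uu, uv), by decide, by decide⟩
def hZ2 : P3Path Hs := ⟨z2, s(uu, uw), by decide, by decide⟩
def hZ3 : P3Path Hs := ⟨z3, s(uv, uw), by decide, by decide⟩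

set_option synthInstance.maxSize 2000 in
lemma classG : ∀ m u v : V7, u ≠ v → Gs.Adj m u → Gs.Adj m v →
    (m = va ∧ s(u, v) = s(x1, x2)) ∨ (m = va ∧ s(u, v) = s(x2, x3)) ∨
    (m = va ∧ s(u, v) = s(x1, x3)) ∨ (m = x1 ∧ s(u, v) = s(va, vb)) ∨
    (m = x2 ∧ s(u, v) = s(va, vc)) ∨ (m = x3 ∧ s(u, v) = s(va, vd)) := by decide

set_option synthInstance.maxSize 2000 in
lemma classH : ∀ m u v : V6, u ≠ v → Hs.Adj m u → Hs.Adj m v →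
    (m = uu ∧ s(u, v) = s(z1, z2)) ∨ (m = uv ∧ s(u, v) = s(z1, z3)) ∨
    (m = uw ∧ s(u, v) = s(z2, z3)) ∨ (m = z1 ∧ s(u, v) = s(uu, uv)) ∨
    (m = z2 ∧ s(u, v) = s(uu, uw)) ∨ (m = z3 ∧ s(u, v) = s(uv, uw)) := by decide

lemma classG' (p : P3Path Gs) :
    p = gA ∨ p = gB ∨ p = gC ∨ p = gP ∨ p = gQ ∨ p = gR := by
  obtain ⟨m, e, hd, ha⟩ := p
  revert hd ha
  induction e using Sym2.ind with
  | _ u v =>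
    intro hd ha
    have h1 : Gs.Adj m u := ha u (Sym2.mem_mk_left u v)
    have h2 : Gs.Adj m v := ha v (Sym2.mem_mk_right u v)
    have hne : u ≠ v := by simpa using hd
    rcases classG m u v hne h1 h2 with ⟨hm, he⟩ | ⟨hm, he⟩ | ⟨hm, he⟩ | ⟨hm, he⟩ |
      ⟨hm, he⟩ | ⟨hm, he⟩
    · exact Or.inl (P3Path.ext hm he)
    · exact Or.inr (Or.inl (P3Path.ext hm he))
    · exact Or.inr (Or.inr (Or.inl (P3Path.ext hm he)))
    · exact Or.inr (Or.inr (Or.inr (Or.inl (P3Path.ext hm he))))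
    · exact Or.inr (Or.inr (Or.inr (Or.inr (Or.inl (P3Path.ext hm he)))))
    · exact Or.inr (Or.inr (Or.inr (Or.inr (Or.inr (P3Path.ext hm he)))))

lemma classH' (p : P3Path Hs) :
    p = hU ∨ p = hV ∨ p = hW ∨ p = hZ1 ∨ p = hZ2 ∨ p = hZ3 := by
  obtain ⟨m, e, hd, ha⟩ := p
  revert hd ha
  induction e using Sym2.ind with
  | _ u v =>
    intro hd ha
    have h1 : Hs.Adj m u := ha u (Sym2.mem_mk_left u v)
    have h2 : Hs.Adj m v := ha v (Sym2.mem_mk_right u v)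
    have hne : u ≠ v := by simpa using hd
    rcases classH m u v hne h1 h2 with ⟨hm, he⟩ | ⟨hm, he⟩ | ⟨hm, he⟩ | ⟨hm, he⟩ |
      ⟨hm, he⟩ | ⟨hm, he⟩
    · exact Or.inl (P3Path.ext hm he)
    · exact Or.inr (Or.inl (P3Path.ext hm he))
    · exact Or.inr (Or.inr (Or.inl (P3Path.ext hm he)))
    · exact Or.inr (Or.inr (Or.inr (Or.inl (P3Path.ext hm he))))
    · exact Or.inr (Or.inr (Or.inr (Or.inr (Or.inl (P3Path.ext hm he)))))
    · exact Or.inr (Or.inr (Or.inr (Or.inr (Or.inr (P3Path.ext hm he)))))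

def fStar (p : P3Path Gs) : P3Path Hs :=
  if p.mid = x1 then hU
  else if p.mid = x2 then hV
  else if p.mid = x3 then hW
  else if x2 ∈ p.ends then (if x1 ∈ p.ends then hZ1 else hZ3)
  else hZ2

def fTri (q : P3Path Hs) : P3Path Gs :=
  if q.mid = uu then gP
  else if q.mid = uv then gQ
  else if q.mid = uw then gR
  else if q.mid = z1 then gA
  else if q.mid = z3 then gB
  else gC

def p3Equiv : P3Path Gs ≃ P3Path Hs where
  toFun := fStar
  invFun := fTri
  left_inv p := by rcases classG' p with rfl | rfl | rfl | rfl | rfl | rfl <;> decide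
  right_inv q := by rcases classH' q with rfl | rfl | rfl | rfl | rfl | rfl <;> decide

def p3Iso : P3Graph Gs ≃g P3Graph Hs where
  toEquiv := p3Equiv
  map_rel_iff' := by
    intro p q
    rcases classG' p with rfl | rfl | rfl | rfl | rfl | rfl <;>
      rcases classG' q with rfl | rfl | rfl | rfl | rfl | rfl <;> decide

end STI

/-- The diamond inflations `G` of `K_{1,3}` and `H` of `K₃` (widths
`s₁, s₂, s₃ ≥ 1`, no terminal edges) are connected; when
`(s₁,s₂,s₃) = (1,1,1)` (giving `SW` and `C₆`) they are nonisomorphic and have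
isomorphic `P₃`-graphs. -/
theorem star_triangle_inflation (s₁ s₂ s₃ : ℕ)
    (h₁ : 0 < s₁) (h₂ : 0 < s₂) (h₃ : 0 < s₃) :
    (starInflation s₁ s₂ s₃).Connected ∧
    (triangleInflation s₁ s₂ s₃).Connected ∧
    (s₁ = 1 ∧ s₂ = 1 ∧ s₃ = 1 →
      ¬ Nonempty (starInflation s₁ s₂ s₃ ≃g triangleInflation s₁ s₂ s₃) ∧
      Nonempty (P3Graph (starInflation s₁ s₂ s₃) ≃g
        P3Graph (triangleInflation s₁ s₂ s₃))) := by
  refine ⟨⟨fun a b => (STI.star_reach s₁ s₂ s₃ h₁ h₂ h₃ a).trans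
      (STI.star_reach s₁ s₂ s₃ h₁ h₂ h₃ b).symm⟩,
    ⟨fun a b => (STI.tri_reach s₁ s₂ s₃ h₁ h₂ h₃ a).trans
      (STI.tri_reach s₁ s₂ s₃ h₁ h₂ h₃ b).symm⟩, ?_⟩
  rintro ⟨rfl, rfl, rfl⟩
  constructor
  · rintro ⟨e⟩
    have := Fintype.card_congr e.toEquiv
    simp at this
  · exact ⟨STI.p3Iso⟩
end
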